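/- Fix a > 0 and H ∈ (0,1). Then D(τ) · Γ(H+5/2) · τ^{−H−3/2} → 1 as τ → 0⁺; equivalently, D(τ) = (1/(Γ(H+5/2) a^{H+3/2})) ( (aτ)^{H+3/2} + o( (aτ)^{H+3/2} ) ) as τ → 0⁺. -/

import Mathlib

open MeasureTheory Real Set Filter Topology

/-- The moving-average kernel of the fractional Ornstein–Uhlenbeck process. -/
noncomputable def fouKernel (a H : ℝ) (t : ℝ) : ℝ :=
  (1 / Real.Gamma (H + 1/2)) *
    (t ^ (H - 1/2) - a * ∫ s in (0:ℝ)..t, (t - s) ^ (H - 1/2) * Real.exp (-a * s))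

/-- The skew function `D(τ) = ∫₀^τ (τ-u) K(u) du`. -/
noncomputable def fouD (a H : ℝ) (τ : ℝ) : ℝ :=
  ∫ u in (0:ℝ)..τ, (τ - u) * fouKernel a H u

open intervalIntegral

lemma aux_int (p τ : ℝ) (hp : -1 < p) (hτ : 0 < τ) :
    ∫ u in (0:ℝ)..τ, (τ - u) * u ^ p = τ ^ (p+2) / ((p+1)*(p+2)) := by
  have hp1 : p + 1 ≠ 0 := by linarith
  have hp2 : p + 2 ≠ 0 := by linarith
  have hi1 : IntervalIntegrable (fun u : ℝ => τ * u ^ p) volume 0 τ :=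
    (intervalIntegrable_rpow' hp).const_mul τ
  have hi2 : IntervalIntegrable (fun u : ℝ => u ^ (p+1)) volume 0 τ :=
    intervalIntegrable_rpow' (by linarith)
  have e0 : ∫ u in (0:ℝ)..τ, (τ - u) * u ^ p
      = ∫ u in (0:ℝ)..τ, (τ * u ^ p - u ^ (p+1)) := by
    apply integral_congr
    intro u hu
    rw [uIcc_of_le hτ.le] at hu
    rcases eq_or_lt_of_le hu.1 with h0 | h0
    · simp [← h0, Real.zero_rpow hp1]
    · simp only []
      rw [Real.rpow_add_one (ne_of_gt h0)]; ring
  rw [e0, integral_sub hi1 hi2, intervalIntegral.integral_const_mul,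
    integral_rpow (Or.inl hp), integral_rpow (Or.inl (by linarith : (-1:ℝ) < p + 1))]
  rw [Real.zero_rpow hp1, Real.zero_rpow (by intro h; apply hp2; linarith : p + 1 + 1 ≠ 0)]
  rw [show p + 1 + 1 = p + 2 by ring, show τ ^ (p+2) = τ ^ (p+1) * τ from by
    rw [← Real.rpow_add_one (ne_of_gt hτ)]; ring_nf]
  field_simp
  ring

lemma aux_g_eq (a h u : ℝ) :
    (∫ s in (0:ℝ)..u, (u - s) ^ h * Real.exp (-a * s))
      = Real.exp (-a*u) * ∫ t in (0:ℝ)..u, t ^ h * Real.exp (a*t) := by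
  have e1 : (∫ s in (0:ℝ)..u, (u - s) ^ h * Real.exp (-a * s))
      = ∫ s in (0:ℝ)..u, (fun t => t ^ h * Real.exp (a*t - a*u)) (u - s) := by
    apply integral_congr
    intro s _
    simp only []
    rw [show a*(u-s) - a*u = -a*s by ring]
  have e2 := integral_comp_sub_left (fun t => t ^ h * Real.exp (a*t - a*u)) u (a := 0) (b := u)
  simp only [sub_self, sub_zero] at e2
  rw [e1, e2, ← intervalIntegral.integral_const_mul]
  apply integral_congr
  intro t _
  simp only []
  rw [show a*t - a*u = -a*u + a*t by ring, Real.exp_add]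
  ring

lemma aux_P_int (a h : ℝ) (hh : -1 < h) (x y : ℝ) :
    IntervalIntegrable (fun t : ℝ => t ^ h * Real.exp (a*t)) volume x y :=
  (intervalIntegrable_rpow' hh).mul_continuousOn
    (Continuous.continuousOn (by continuity))

lemma aux_g_cont (a h τ : ℝ) (hh : -1 < h) :
    ContinuousOn (fun u => ∫ s in (0:ℝ)..u, (u - s) ^ h * Real.exp (-a * s))
      (Set.uIcc (0:ℝ) τ) := by
  have : ContinuousOn (fun u : ℝ => Real.exp (-a*u) * ∫ t in (0:ℝ)..u, t ^ h * Real.exp (a*t))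
      (Set.uIcc (0:ℝ) τ) := by
    apply ContinuousOn.mul (Continuous.continuousOn (by continuity))
    exact continuousOn_primitive_interval' (aux_P_int a h hh 0 τ) left_mem_uIcc
  exact this.congr (fun u _ => aux_g_eq a h u)

lemma aux_g_nonneg (a h u : ℝ) (hu : 0 ≤ u) :
    0 ≤ ∫ s in (0:ℝ)..u, (u - s) ^ h * Real.exp (-a * s) := by
  apply integral_nonneg hu
  intro s hs
  exact mul_nonneg (Real.rpow_nonneg (by linarith [hs.1, hs.2]) h) (Real.exp_nonneg _)

lemma aux_g_le (a h u : ℝ) (ha : 0 ≤ a) (hh : -1 < h) (hu : 0 ≤ u) :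
    (∫ s in (0:ℝ)..u, (u - s) ^ h * Real.exp (-a * s)) ≤ u ^ (h+1) / (h+1) := by
  have h1 : h + 1 ≠ 0 := by linarith
  rw [aux_g_eq]
  have hP : (∫ t in (0:ℝ)..u, t ^ h * Real.exp (a*t))
      ≤ ∫ t in (0:ℝ)..u, t ^ h * Real.exp (a*u) := by
    apply integral_mono_on hu (aux_P_int a h hh 0 u)
      ((intervalIntegrable_rpow' hh).mul_const _)
    intro t ht
    exact mul_le_mul_of_nonneg_left (Real.exp_le_exp.mpr
      (by nlinarith [ht.1, ht.2])) (Real.rpow_nonneg ht.1 h)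
  have hPn : (∫ t in (0:ℝ)..u, t ^ h * Real.exp (a*u)) = Real.exp (a*u) * (u^(h+1)/(h+1)) := by
    rw [intervalIntegral.integral_mul_const, integral_rpow (Or.inl hh), Real.zero_rpow h1, sub_zero]
    ring
  calc Real.exp (-a*u) * ∫ t in (0:ℝ)..u, t ^ h * Real.exp (a*t)
      ≤ Real.exp (-a*u) * (Real.exp (a*u) * (u^(h+1)/(h+1))) := by
        apply mul_le_mul_of_nonneg_left _ (Real.exp_nonneg _)
        rw [← hPn]; exact hP
    _ = u ^ (h+1) / (h+1) := by
        rw [← mul_assoc, ← Real.exp_add, show -a*u + a*u = 0 by ring, Real.exp_zero, one_mul]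

lemma fouD_eq (a H τ : ℝ) (hH1 : 0 < H) (hτ : 0 < τ) :
    fouD a H τ = (1/Real.Gamma (H+1/2)) * (τ^(H+3/2)/((H+1/2)*(H+3/2))
      - a * ∫ u in (0:ℝ)..τ, (τ-u) * ∫ s in (0:ℝ)..u, (u-s)^(H-1/2)*Real.exp (-a*s)) := by
  have hh : (-1:ℝ) < H - 1/2 := by linarith
  have I1 : IntervalIntegrable (fun u : ℝ => (τ-u)*u^(H-1/2)) volume 0 τ :=
    (intervalIntegrable_rpow' hh).continuousOn_mul
      (Continuous.continuousOn (by continuity))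
  have I2 : IntervalIntegrable
      (fun u : ℝ => a * ((τ-u) * ∫ s in (0:ℝ)..u, (u-s)^(H-1/2)*Real.exp (-a*s)))
      volume 0 τ := by
    apply ContinuousOn.intervalIntegrable
    exact continuousOn_const.mul
      (((continuous_const.sub continuous_id).continuousOn).mul (aux_g_cont a (H-1/2) τ hh))
  have e0 : fouD a H τ = ∫ u in (0:ℝ)..τ,
      (1/Real.Gamma (H+1/2)) * ((τ-u)*u^(H-1/2)
        - a * ((τ-u) * ∫ s in (0:ℝ)..u, (u-s)^(H-1/2)*Real.exp (-a*s))) := by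
    rw [fouD]
    apply integral_congr
    intro u _
    simp only [fouKernel]
    ring
  rw [e0, intervalIntegral.integral_const_mul, integral_sub I1 I2, intervalIntegral.integral_const_mul,
    aux_int (H-1/2) τ hh hτ,
    show H - 1/2 + 2 = H + 3/2 by ring, show H - 1/2 + 1 = H + 1/2 by ring]

theorem fouD_asymptotics_zero (a H : ℝ) (ha : 0 < a) (hH : H ∈ Set.Ioo (0:ℝ) 1) :
    Tendsto (fun τ : ℝ => fouD a H τ * Real.Gamma (H + 5/2) * τ ^ (-H - 3/2))
      (𝓝[>] 0) (𝓝 1) := by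
  obtain ⟨hH1, hH2⟩ := hH
  have hh : (-1:ℝ) < H - 1/2 := by linarith
  have hG1 : 0 < Real.Gamma (H + 1/2) := Real.Gamma_pos_of_pos (by linarith)
  have hG5 : Real.Gamma (H + 5/2) = (H+3/2) * ((H+1/2) * Real.Gamma (H+1/2)) := by
    rw [show H + 5/2 = (H + 3/2) + 1 by ring, Real.Gamma_add_one (by positivity),
      show H + 3/2 = (H + 1/2) + 1 by ring, Real.Gamma_add_one (by positivity)]
  -- key pointwise bounds
  have key : ∀ τ : ℝ, 0 < τ →
      1 - a/(H+5/2)*τ ≤ fouD a H τ * Real.Gamma (H + 5/2) * τ ^ (-H - 3/2) ∧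
      fouD a H τ * Real.Gamma (H + 5/2) * τ ^ (-H - 3/2) ≤ 1 := by
    intro τ hτ
    set g : ℝ → ℝ := fun u => ∫ s in (0:ℝ)..u, (u-s)^(H-1/2)*Real.exp (-a*s) with hg
    set R : ℝ := ∫ u in (0:ℝ)..τ, (τ-u) * g u with hR
    have Rnn : 0 ≤ R := by
      apply integral_nonneg hτ.le
      intro u hu
      exact mul_nonneg (by linarith [hu.2]) (aux_g_nonneg a (H-1/2) u hu.1)
    have Rub : R ≤ τ^(H+5/2)/((H+1/2)*(H+3/2)*(H+5/2)) := by
      have step1 : R ≤ ∫ u in (0:ℝ)..τ, ((τ-u) * u^(H-1/2+1)) * (1/(H-1/2+1)) := by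
        apply integral_mono_on hτ.le
        · apply ContinuousOn.intervalIntegrable
          exact ((continuous_const.sub continuous_id).continuousOn).mul
            (aux_g_cont a (H-1/2) τ hh)
        · exact (((intervalIntegrable_rpow' (by linarith : (-1:ℝ) < H-1/2+1)).continuousOn_mul
            (Continuous.continuousOn (by continuity))).mul_const _)
        · intro u hu
          have := aux_g_le a (H-1/2) u ha.le hh hu.1
          calc (τ - u) * g u ≤ (τ - u) * (u ^ (H-1/2+1) / (H-1/2+1)) := by
                apply mul_le_mul_of_nonneg_left this (by linarith [hu.2])
            _ = ((τ-u) * u^(H-1/2+1)) * (1/(H-1/2+1)) := by ring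
      have step2 : ∫ u in (0:ℝ)..τ, ((τ-u) * u^(H-1/2+1)) * (1/(H-1/2+1))
          = τ^(H+5/2)/((H+1/2)*(H+3/2)*(H+5/2)) := by
        rw [intervalIntegral.integral_mul_const, aux_int (H-1/2+1) τ (by linarith) hτ,
          show H-1/2+1+2 = H+5/2 by ring, show H-1/2+1+1 = H+3/2 by ring,
          show H-1/2+1 = H+1/2 by ring]
        field_simp
      linarith [step1, step2 ▸ step1]
    have ht1 : τ^(H+3/2) * τ^(-H-3/2) = 1 := by
      rw [← Real.rpow_add hτ, show H+3/2 + (-H-3/2) = 0 by ring, Real.rpow_zero]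
    have ht2 : τ^(H+5/2) * τ^(-H-3/2) = τ := by
      rw [← Real.rpow_add hτ, show H+5/2 + (-H-3/2) = 1 by ring, Real.rpow_one]
    have keyeq : fouD a H τ * Real.Gamma (H + 5/2) * τ ^ (-H - 3/2)
        = 1 - (H+1/2)*(H+3/2)*a*R*τ^(-H-3/2) := by
      rw [fouD_eq a H τ hH1 hτ, hG5, ← hR]
      have expand : (1/Real.Gamma (H+1/2)) * (τ^(H+3/2)/((H+1/2)*(H+3/2)) - a * R)
            * ((H+3/2) * ((H+1/2) * Real.Gamma (H+1/2))) * τ^(-H-3/2)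
          = τ^(H+3/2)*τ^(-H-3/2) - (H+1/2)*(H+3/2)*a*R*τ^(-H-3/2) := by
        field_simp
      rw [expand, ht1]
    have hterm_nn : 0 ≤ (H+1/2)*(H+3/2)*a*R*τ^(-H-3/2) := by positivity
    have hterm_ub : (H+1/2)*(H+3/2)*a*R*τ^(-H-3/2) ≤ a/(H+5/2)*τ := by
      calc (H+1/2)*(H+3/2)*a*R*τ^(-H-3/2)
          ≤ (H+1/2)*(H+3/2)*a*(τ^(H+5/2)/((H+1/2)*(H+3/2)*(H+5/2)))*τ^(-H-3/2) := by
            gcongr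
        _ = a/(H+5/2)*(τ^(H+5/2)*τ^(-H-3/2)) := by field_simp
        _ = a/(H+5/2)*τ := by rw [ht2]
    rw [keyeq]
    constructor <;> linarith
  have hlow : Tendsto (fun τ : ℝ => 1 - a/(H+5/2)*τ) (𝓝[>] 0) (𝓝 1) := by
    have hc : Continuous (fun τ : ℝ => 1 - a/(H+5/2)*τ) := by continuity
    have := hc.tendsto 0
    simp only [mul_zero, sub_zero] at this
    exact this.mono_left nhdsWithin_le_nhds
  apply tendsto_of_tendsto_of_tendsto_of_le_of_le' hlow tendsto_const_nhds
  · filter_upwards [self_mem_nhdsWithin] with τ hτ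
    exact (key τ hτ).1
  · filter_upwards [self_mem_nhdsWithin] with τ hτ
    exact (key τ hτ).2
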